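/- Let F be a finite field, ℓ a prime dividing |F| − 1, and n ≥ 1. Then every elementary abelian ℓ-subgroup E of the general linear group GL_n(F) is conjugate in GL_n(F) to a subgroup of the subgroup of diagonal matrices; that is, there exists g ∈ GL_n(F) such that every element of g E g⁻¹ is a diagonal matrix. -/

import Mathlib

open Polynomial Module

section Aux

variable {K V : Type*} [Field K] [AddCommGroup V] [Module K V]

lemma ker_aeval_prod_X_sub_C_le (f : Module.End K V) (s : Finset K) :
    LinearMap.ker (aeval f (∏ μ ∈ s, (X - C μ))) ≤ ⨆ μ ∈ s, f.eigenspace μ := by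
  classical
  induction s using Finset.induction_on with
  | empty => simp [Module.End.one_eq_id]
  | @insert a t ha ih =>
      rw [Finset.prod_insert ha]
      have hcop : IsCoprime (X - C a : K[X]) (∏ μ ∈ t, (X - C μ)) :=
        IsCoprime.prod_right fun μ hμ =>
          isCoprime_X_sub_C_of_isUnit_sub
            (sub_ne_zero_of_ne (by rintro rfl; exact ha hμ)).isUnit
      rw [← sup_ker_aeval_eq_ker_aeval_mul_of_coprime f hcop]
      have h1 : LinearMap.ker (aeval f (X - C a)) = f.eigenspace a := by
        rw [Module.End.eigenspace_def, map_sub, aeval_X, aeval_C,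
          Module.algebraMap_end_eq_smul_id, Module.End.one_eq_id]
      refine sup_le ?_ (ih.trans ?_)
      · rw [h1]
        exact le_iSup₂ (f := fun μ _ => f.eigenspace μ) a (Finset.mem_insert_self a t)
      · exact iSup_le fun μ => iSup_le fun hμ =>
          le_iSup₂ (f := fun μ _ => f.eigenspace μ) μ (Finset.mem_insert_of_mem hμ)

lemma iSup_maxGenEigenspace_eq_top_of_pow_eq_one (f : Module.End K V) {ℓ : ℕ} (hl : 0 < ℓ)
    {ζ : K} (hζ : IsPrimitiveRoot ζ ℓ) (hf : f ^ ℓ = 1) :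
    ⨆ μ, f.maxGenEigenspace μ = ⊤ := by
  have h0 : aeval f ((X : K[X]) ^ ℓ - 1) = 0 := by
    simp [map_sub, map_pow, aeval_X, hf]
  rw [Polynomial.X_pow_sub_one_eq_prod hl hζ] at h0
  have hker := ker_aeval_prod_X_sub_C_le f (Polynomial.nthRootsFinset ℓ (1 : K))
  rw [h0, LinearMap.ker_zero] at hker
  refine top_le_iff.mp (hker.trans ?_)
  refine iSup_le fun μ => iSup_le fun _ => ?_
  exact le_iSup_of_le μ ((f.genEigenspace μ).monotone le_top)

end Aux

/-- An elementary abelian `ℓ`-subgroup: a subgroup that is commutative and in which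
every element `x` satisfies `x ^ ℓ = 1`. -/
def IsElementaryAbelian (ℓ : ℕ) {G : Type*} [Group G] (E : Subgroup G) : Prop :=
  (∀ x ∈ E, ∀ y ∈ E, x * y = y * x) ∧ ∀ x ∈ E, x ^ ℓ = 1

/-- The conjugate subgroup `g E g⁻¹`. -/
def conjSubgroup {G : Type*} [Group G] (g : G) (E : Subgroup G) : Subgroup G :=
  E.map (MulAut.conj g).toMonoidHom

/-- A maximal elementary abelian `ℓ`-subgroup: one that is not properly contained in
any other elementary abelian `ℓ`-subgroup. -/
def IsMaximalElementaryAbelian (ℓ : ℕ) {G : Type*} [Group G] (E : Subgroup G) : Prop :=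
  IsElementaryAbelian ℓ E ∧
    ∀ E' : Subgroup G, IsElementaryAbelian ℓ E' → E ≤ E' → E' = E

/-- if `ℓ` is a prime dividing `|F| − 1`, every elementary abelian
`ℓ`-subgroup of `GL_n(F)` is conjugate to a subgroup of the diagonal matrices. -/
theorem elemAb_subgroup_GL_conjugate_to_diagonal
    (F : Type*) [Field F] [Finite F] (ℓ : ℕ) (hℓ : ℓ.Prime)
    (hdvd : ℓ ∣ Nat.card F - 1) (n : ℕ) (hn : 1 ≤ n)
    (E : Subgroup (GL (Fin n) F)) (hE : IsElementaryAbelian ℓ E) :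
    ∃ g : GL (Fin n) F, ∀ x ∈ conjSubgroup g E,
      Matrix.IsDiag (x : Matrix (Fin n) (Fin n) F) := by
  classical
  -- a primitive ℓ-th root of unity in F
  obtain ⟨g0, hg0⟩ := IsCyclic.exists_ofOrder_eq_natCard (α := Fˣ)
  have hg0ne : orderOf g0 ≠ 0 := by
    rw [hg0]; exact Nat.card_pos.ne'
  have hdvd' : ℓ ∣ orderOf g0 := by
    rw [hg0, Nat.card_units]; exact hdvd
  have hordζ : orderOf (g0 ^ (orderOf g0 / ℓ)) = ℓ :=
    orderOf_pow_orderOf_div hg0ne hdvd'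
  set ζu : Fˣ := g0 ^ (orderOf g0 / ℓ)
  have hζ : IsPrimitiveRoot ((ζu : F)) ℓ := by
    have := IsPrimitiveRoot.orderOf ((ζu : Fˣ) : F)
    rwa [orderOf_units, hordζ] at this
  -- (ℓ : F) ≠ 0
  have hℓF : (ℓ : F) ≠ 0 := by
    intro h0
    obtain ⟨p, hp⟩ := CharP.exists F
    have := Fintype.ofFinite F
    have pp : p.Prime := CharP.char_is_prime F p
    have hpl : p ∣ ℓ := (CharP.cast_eq_zero_iff F p ℓ).mp h0
    have hpe : p = ℓ := (Nat.prime_dvd_prime_iff_eq pp hℓ).mp hpl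
    have hcard : ℓ ∣ Nat.card F := by
      rw [← hpe, Nat.card_eq_fintype_card]
      exact (CharP.cast_eq_zero_iff F p (Fintype.card F)).mp (FiniteField.cast_card_eq_zero F)
    have h2 : 2 ≤ Nat.card F := Finite.one_lt_card
    have h1 : ℓ ∣ 1 := by
      have hd := Nat.dvd_sub hcard hdvd
      rwa [Nat.sub_sub_self (by omega : 1 ≤ Nat.card F)] at hd
    have := hℓ.two_le
    have := Nat.le_of_dvd one_pos h1
    omega
  -- squarefreeness of X^ℓ - 1
  have hsf : Squarefree ((X : F[X]) ^ ℓ - 1) := by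
    have := (Polynomial.separable_X_pow_sub_C (1 : F) hℓF one_ne_zero).squarefree
    rwa [Polynomial.C_1] at this
  -- the endomorphisms
  set φ := Matrix.toLinAlgEquiv' (R := F) (n := Fin n)
  set f : E → Module.End F (Fin n → F) :=
    fun x => φ ((x : GL (Fin n) F) : Matrix (Fin n) (Fin n) F) with hf
  have hfpow : ∀ x : E, (f x) ^ ℓ = 1 := by
    intro x
    have hx : (x : GL (Fin n) F) ^ ℓ = 1 := hE.2 _ x.2
    have hxm : (((x : GL (Fin n) F) : Matrix (Fin n) (Fin n) F)) ^ ℓ = 1 := by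
      rw [← Units.val_pow_eq_pow_val, hx, Units.val_one]
    rw [hf, ← map_pow, hxm, map_one]
  have hcomm : Pairwise fun x y : E => Commute (f x) (f y) := by
    intro x y _
    have h := hE.1 _ x.2 _ y.2
    have hm : (((x : GL (Fin n) F) : Matrix (Fin n) (Fin n) F)) *
        ((y : GL (Fin n) F) : Matrix (Fin n) (Fin n) F) =
        (((y : GL (Fin n) F) : Matrix (Fin n) (Fin n) F)) *
        ((x : GL (Fin n) F) : Matrix (Fin n) (Fin n) F) := by
      rw [← Units.val_mul, ← Units.val_mul, h]
    show f x * f y = f y * f x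
    rw [hf, ← map_mul, ← map_mul, hm]
  have hsup : ∀ x : E, ⨆ μ, (f x).maxGenEigenspace μ = ⊤ := fun x =>
    iSup_maxGenEigenspace_eq_top_of_pow_eq_one (f x) hℓ.pos hζ (hfpow x)
  -- semisimplicity
  have hss : ∀ x : E, (f x).IsFinitelySemisimple := by
    intro x
    refine (Module.End.isSemisimple_of_squarefree_aeval_eq_zero hsf ?_).isFinitelySemisimple
    simp [map_sub, map_pow, aeval_X, hfpow x]
  -- simultaneous eigenspace decomposition
  have htop : ⨆ χ : E → F, ⨅ x, (f x).maxGenEigenspace (χ x) = ⊤ :=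
    Module.End.iSup_iInf_maxGenEigenspace_eq_top_of_iSup_maxGenEigenspace_eq_top_of_commute
      f hcomm hsup
  have hind : iSupIndep fun χ : E → F => ⨅ x, (f x).maxGenEigenspace (χ x) := by
    refine Module.End.independent_iInf_maxGenEigenspace_of_forall_mapsTo f ?_
    intro i j μ
    rcases eq_or_ne j i with rfl | hij
    · exact Module.End.mapsTo_maxGenEigenspace_of_comm rfl μ
    · exact Module.End.mapsTo_maxGenEigenspace_of_comm (hcomm hij) μ
  set A : (E → F) → Submodule F (Fin n → F) :=
    fun χ => ⨅ x, (f x).maxGenEigenspace (χ x) with hA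
  have hint : DirectSum.IsInternal A :=
    (DirectSum.isInternal_submodule_iff_iSupIndep_and_iSup_eq_top A).mpr ⟨hind, htop⟩
  -- build a basis of simultaneous eigenvectors
  have : Finite E := Subtype.finite
  have : Fintype (E → F) := Fintype.ofFinite _
  let cb : ∀ χ : E → F, Basis (Module.Free.ChooseBasisIndex F (A χ)) F (A χ) :=
    fun χ => Module.Free.chooseBasis F (A χ)
  let b0 := hint.collectedBasis cb
  have : Fintype ((χ : E → F) × Module.Free.ChooseBasisIndex F (A χ)) := Fintype.ofFinite _
  have hcard : Fintype.card ((χ : E → F) × Module.Free.ChooseBasisIndex F (A χ)) = n := by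
    rw [← Module.finrank_eq_card_basis b0, Module.finrank_fin_fun]
  let e := Fintype.equivFinOfCardEq hcard
  let b := b0.reindex e
  -- eigenvector property
  have hb : ∀ (i : Fin n) (x : E), f x (b i) = (e.symm i).1 x • b i := by
    intro i x
    have hmem : (b0 (e.symm i)) ∈ A (e.symm i).1 := hint.collectedBasis_mem cb (e.symm i)
    have hmem2 : (b0 (e.symm i)) ∈ (f x).maxGenEigenspace ((e.symm i).1 x) := by
      exact (Submodule.mem_iInf _).mp hmem x
    rw [(hss x).maxGenEigenspace_eq_eigenspace] at hmem2
    have := Module.End.mem_eigenspace_iff.mp hmem2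
    simpa [b, Module.Basis.reindex_apply] using this
  -- the change-of-basis matrices
  let std : Basis (Fin n) F (Fin n → F) := Pi.basisFun F (Fin n)
  let P : Matrix (Fin n) (Fin n) F := b.toMatrix std
  let Q : Matrix (Fin n) (Fin n) F := std.toMatrix b
  have hPQ : P * Q = 1 := Basis.toMatrix_mul_toMatrix_flip b std
  have hQP : Q * P = 1 := Basis.toMatrix_mul_toMatrix_flip std b
  refine ⟨⟨P, Q, hPQ, hQP⟩, ?_⟩
  rintro y ⟨x, hx, rfl⟩
  -- the conjugated matrix is the matrix of f in basis b
  have key : P * ((x : Matrix (Fin n) (Fin n) F)) * Q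
      = LinearMap.toMatrix b b (f ⟨x, hx⟩) := by
    have h1 : LinearMap.toMatrix std std (f ⟨x, hx⟩) = (x : Matrix (Fin n) (Fin n) F) := by
      rw [show (std : Basis (Fin n) F (Fin n → F)) = Pi.basisFun F (Fin n) from rfl,
        LinearMap.toMatrix_eq_toMatrix']
      exact LinearMap.toMatrix'_toLin' _
    rw [← h1]
    exact basis_toMatrix_mul_linearMap_toMatrix_mul_basis_toMatrix b std b std (f ⟨x, hx⟩)
  have hdiag : Matrix.IsDiag (LinearMap.toMatrix b b (f ⟨x, hx⟩)) := by
    intro i j hij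
    rw [LinearMap.toMatrix_apply, hb j ⟨x, hx⟩, map_smul, Basis.repr_self]
    simp [Finsupp.single_apply, hij.symm]
  have h2 : (((MulAut.conj (⟨P, Q, hPQ, hQP⟩ : GL (Fin n) F)).toMonoidHom x :
      GL (Fin n) F) : Matrix (Fin n) (Fin n) F)
      = P * ((x : Matrix (Fin n) (Fin n) F)) * Q := rfl
  show Matrix.IsDiag (((MulAut.conj (⟨P, Q, hPQ, hQP⟩ : GL (Fin n) F)).toMonoidHom x :
      GL (Fin n) F) : Matrix (Fin n) (Fin n) F)
  rw [h2, key]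
  exact hdiag
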